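/- Let R be a PID, I an ideal of a subring R₂ = R ∩ K where K is a subfield of Frac(R) containing R₂. If IR = aR with a = ir for i ∈ I, r ∈ R, then every x ∈ I satisfies x ∈ iR₂, i.e. I ⊆ iR₂. -/

import Mathlib

/-- Let `R` be a PID, `K` a subfield of `Frac R`, `R₂ = R ∩ K`, `I` an ideal of
`R₂`. If `IR = aR` with `a = i*r` for `i ∈ I`, `r ∈ R`, then every `x ∈ I`
satisfies `x ∈ i·R₂`, i.e. `I ⊆ i·R₂`. -/
theorem ideal_subset_span_of_generator
    (R : Type*) [CommRing R] [IsDomain R] [IsPrincipalIdealRing R]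
    (K : Subfield (FractionRing R))
    (R₂ : Subring R)
    (hR₂ : R₂ = Subring.comap (algebraMap R (FractionRing R)) K.toSubring)
    (I : Ideal R₂) (i : R₂) (hi : i ∈ I) (r : R)
    (hIR : Ideal.span ((fun x : R₂ => (x : R)) '' (I : Set R₂))
        = Ideal.span {(i : R) * r}) :
    I ≤ Ideal.span {i} := by
  intro x hx
  have hxR : (x : R) ∈ Ideal.span {(i : R) * r} := by
    rw [← hIR]
    exact Ideal.subset_span ⟨x, hx, rfl⟩
  obtain ⟨t, ht⟩ := Ideal.mem_span_singleton'.mp hxR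
  rw [Ideal.mem_span_singleton']
  by_cases hi0 : i = 0
  · subst hi0
    have hx0 : (x : R) = 0 := by simpa using ht.symm
    exact ⟨0, by ext; simp [hx0]⟩
  · -- i ≠ 0; show r * t ∈ R₂
    set F := FractionRing R
    have hinj : Function.Injective (algebraMap R F) :=
      IsFractionRing.injective R F
    have hiF : algebraMap R F (i : R) ≠ 0 := by
      intro h
      apply hi0
      have : (i : R) = 0 := hinj (by simpa using h)
      exact Subtype.ext this
    have hc : r * t ∈ R₂ := by
      rw [hR₂]
      have hK : ∀ y : R, y ∈ R₂ → algebraMap R F y ∈ K := by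
        intro y hy
        rw [hR₂] at hy
        exact hy
      have hxK : algebraMap R F (x : R) ∈ K := hK _ x.2
      have hiK : algebraMap R F (i : R) ∈ K := hK _ i.2
      have heq : algebraMap R F (r * t) =
          algebraMap R F (x : R) / algebraMap R F (i : R) := by
        rw [eq_div_iff hiF, map_mul]
        rw [← map_mul, ← map_mul]
        congr 1
        rw [← ht]; ring
      show algebraMap R F (r * t) ∈ K
      rw [heq]
      exact K.div_mem hxK hiK
    refine ⟨⟨r * t, hc⟩, ?_⟩
    ext
    push_cast
    rw [← ht]; ring
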